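/- A signed cubic graph admits a nowhere-zero ℤ₃-flow if and only if it is antibalanced (switching-equivalent to an all-negative signed graph). -/

import Mathlib

open Finset

/-- A signed multigraph on vertex type `V` with edge type `E`:
each edge has an ordered pair of endpoints and a sign (`neg e = true` means negative). -/
structure SignedMultigraph (V E : Type) where
  ends : E → V × V
  neg : E → Bool

namespace SignedMultigraph

variable {V E : Type} [Fintype V] [Fintype E] [DecidableEq V] [DecidableEq E]

/-- Degree of `v` in the edge subset `F` (loops count twice). -/
def degIn (G : SignedMultigraph V E) (F : Finset E) (v : V) : ℕ :=
  ∑ e ∈ F, ((if (G.ends e).1 = v then 1 else 0) + (if (G.ends e).2 = v then 1 else 0))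

/-- Adjacency via an edge of `F`. -/
def adj (G : SignedMultigraph V E) (F : Finset E) (v w : V) : Prop :=
  ∃ e ∈ F, G.ends e = (v, w) ∨ G.ends e = (w, v)

/-- Vertices incident with an edge of `F`. -/
def supp (G : SignedMultigraph V E) (F : Finset E) : Set V :=
  {v | ∃ e ∈ F, (G.ends e).1 = v ∨ (G.ends e).2 = v}

/-- Reachability using edges of `F`. -/
def reach (G : SignedMultigraph V E) (F : Finset E) : V → V → Prop :=
  Relation.ReflTransGen (G.adj F)

/-- `F` is (the edge set of) a circuit: nonempty, every vertex has degree 0 or 2,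
and the support is connected. -/
def IsCircuit (G : SignedMultigraph V E) (F : Finset E) : Prop :=
  F.Nonempty ∧ (∀ v, G.degIn F v = 0 ∨ G.degIn F v = 2) ∧
    ∀ v ∈ G.supp F, ∀ w ∈ G.supp F, G.reach F v w

/-- The negative edges inside `F`. -/
def negEdges (G : SignedMultigraph V E) (F : Finset E) : Finset E :=
  F.filter (fun e => G.neg e = true)

def IsBalancedCircuit (G : SignedMultigraph V E) (F : Finset E) : Prop :=
  G.IsCircuit F ∧ Even (G.negEdges F).card

def IsUnbalancedCircuit (G : SignedMultigraph V E) (F : Finset E) : Prop :=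
  G.IsCircuit F ∧ Odd (G.negEdges F).card

/-- A signed graph is balanced if every circuit has an even number of negative edges. -/
def Balanced (G : SignedMultigraph V E) : Prop :=
  ∀ F : Finset E, G.IsCircuit F → Even (G.negEdges F).card

/-- `P` is the edge set of a path from `v₁` to `v₂` (trivial iff `v₁ = v₂`). -/
def IsPathBetween (G : SignedMultigraph V E) (P : Finset E) (v₁ v₂ : V) : Prop :=
  if v₁ = v₂ then P = ∅ else
    G.degIn P v₁ = 1 ∧ G.degIn P v₂ = 1 ∧
    (∀ v, v ≠ v₁ → v ≠ v₂ → G.degIn P v = 0 ∨ G.degIn P v = 2) ∧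
    ∀ v ∈ G.supp P, ∀ w ∈ G.supp P, G.reach P v w

/-- `F` is a barbell: two unbalanced circuits joined by a (possibly trivial) path. -/
def IsBarbell (G : SignedMultigraph V E) (F : Finset E) : Prop :=
  ∃ (C₁ C₂ P : Finset E) (v₁ v₂ : V),
    G.IsUnbalancedCircuit C₁ ∧ G.IsUnbalancedCircuit C₂ ∧
    G.IsPathBetween P v₁ v₂ ∧ v₁ ∈ G.supp C₁ ∧ v₂ ∈ G.supp C₂ ∧
    F = C₁ ∪ C₂ ∪ P ∧
    (G.supp C₁ \ {v₁}) ∩ G.supp (C₂ ∪ P) = ∅ ∧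
    (G.supp C₂ \ {v₂}) ∩ G.supp (C₁ ∪ P) = ∅

/-- A signed circuit is a balanced circuit or a barbell. -/
def IsSignedCircuit (G : SignedMultigraph V E) (F : Finset E) : Prop :=
  G.IsBalancedCircuit F ∨ G.IsBarbell F

/-- A bidirection `d` assigns to each half-edge a direction (`true` = toward its endpoint);
it is an orientation of the signed graph if negative edges are exactly the
extroverted/introverted ones. -/
def IsOrientation (G : SignedMultigraph V E) (d : E → Bool × Bool) : Prop :=
  ∀ e, G.neg e = true ↔ (d e).1 = (d e).2

/-- Net inflow at vertex `v` (incoming half-edges count `+φ e`, outgoing `-φ e`). -/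
def vertexSum {Γ : Type} [AddCommGroup Γ] (G : SignedMultigraph V E)
    (d : E → Bool × Bool) (φ : E → Γ) (v : V) : Γ :=
  ∑ e, ((if (G.ends e).1 = v then (if (d e).1 then φ e else -φ e) else 0) +
        (if (G.ends e).2 = v then (if (d e).2 then φ e else -φ e) else 0))

/-- `(d, φ)` is a flow: `d` is an orientation and Kirchhoff's law holds at every vertex. -/
def IsFlow {Γ : Type} [AddCommGroup Γ] (G : SignedMultigraph V E)
    (d : E → Bool × Bool) (φ : E → Γ) : Prop :=
  G.IsOrientation d ∧ ∀ v, G.vertexSum d φ v = 0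

/-- Nowhere-zero `Γ`-flow. -/
def HasNZGroupFlow (G : SignedMultigraph V E) (Γ : Type) [AddCommGroup Γ] : Prop :=
  ∃ (d : E → Bool × Bool) (φ : E → Γ), G.IsFlow d φ ∧ ∀ e, φ e ≠ 0

/-- Flow-admissible: has a nowhere-zero integer flow. -/
def FlowAdmissible (G : SignedMultigraph V E) : Prop :=
  ∃ (d : E → Bool × Bool) (φ : E → ℤ), G.IsFlow d φ ∧ ∀ e, φ e ≠ 0

/-- Nowhere-zero `k`-flow: integer flow with `0 < |φ e| < k`. -/
def HasNZkFlow (G : SignedMultigraph V E) (k : ℤ) : Prop :=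
  ∃ (d : E → Bool × Bool) (φ : E → ℤ), G.IsFlow d φ ∧ ∀ e, 0 < |φ e| ∧ |φ e| < k

/-- The flow number: least `k : ℕ` admitting a nowhere-zero `k`-flow. -/
noncomputable def flowNum (G : SignedMultigraph V E) : ℕ :=
  sInf {k : ℕ | G.HasNZkFlow (k : ℤ)}

/-- Circular `t`-flow: real flow with `1 ≤ |φ e| ≤ t - 1`. -/
def HasCircularFlow (G : SignedMultigraph V E) (t : ℝ) : Prop :=
  ∃ (d : E → Bool × Bool) (φ : E → ℝ), G.IsFlow d φ ∧ ∀ e, 1 ≤ |φ e| ∧ |φ e| ≤ t - 1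

/-- The circular flow number. -/
noncomputable def circFlowNum (G : SignedMultigraph V E) : ℝ :=
  sInf {t : ℝ | G.HasCircularFlow t}

/-- Bridgeless: the endpoints of each edge are joined by a path avoiding that edge. -/
def Bridgeless (G : SignedMultigraph V E) : Prop :=
  ∀ e : E, G.reach (Finset.univ.erase e) (G.ends e).1 (G.ends e).2

/-- Switching at a vertex `v`. -/
def switch (G : SignedMultigraph V E) (v : V) : SignedMultigraph V E where
  ends := G.ends
  neg := fun e => xor (G.neg e) (xor (decide ((G.ends e).1 = v)) (decide ((G.ends e).2 = v)))

/-- Switching equivalence of signed graphs on the same underlying graph. -/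
def Equivalent (G₁ G₂ : SignedMultigraph V E) : Prop :=
  Relation.ReflTransGen (fun H₁ H₂ => ∃ v : V, H₂ = H₁.switch v) G₁ G₂

/-- Antibalanced: switching-equivalent to an all-negative signed graph. -/
def Antibalanced (G : SignedMultigraph V E) : Prop :=
  ∃ G' : SignedMultigraph V E, G.Equivalent G' ∧ ∀ e, G'.neg e = true

/-- No vertex of the support of `S` is a source or a sink of `d` restricted to `S`. -/
def NoSourceSink (G : SignedMultigraph V E) (d : E → Bool × Bool) (S : Finset E) : Prop :=
  ∀ v ∈ G.supp S,
    (∃ e ∈ S, ((G.ends e).1 = v ∧ (d e).1 = true) ∨ ((G.ends e).2 = v ∧ (d e).2 = true)) ∧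
    (∃ e ∈ S, ((G.ends e).1 = v ∧ (d e).1 = false) ∨ ((G.ends e).2 = v ∧ (d e).2 = false))

/-- Zero-sum `k`-flow on the underlying (unsigned) graph. -/
def ZeroSumFlow (G : SignedMultigraph V E) (k : ℤ) : Prop :=
  ∃ f : E → ℤ, (∀ e, 1 ≤ |f e| ∧ |f e| ≤ k - 1) ∧
    ∀ v : V, (∑ e, ((if (G.ends e).1 = v then f e else 0) +
                    (if (G.ends e).2 = v then f e else 0))) = 0
lemma switch_ends (G : SignedMultigraph V E) (v : V) : (G.switch v).ends = G.ends := rfl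

lemma switch_switch (G : SignedMultigraph V E) (v : V) : (G.switch v).switch v = G := by
  cases G with
  | mk en ng =>
    show SignedMultigraph.mk en _ = SignedMultigraph.mk en ng
    congr 1
    funext e
    simp only [switch]
    cases ng e <;> by_cases h1 : (en e).1 = v <;> by_cases h2 : (en e).2 = v <;> simp [h1, h2]

lemma flow_switch {Γ : Type} [AddCommGroup Γ] (G : SignedMultigraph V E) (v : V)
    (h : G.HasNZGroupFlow Γ) : (G.switch v).HasNZGroupFlow Γ := by
  obtain ⟨d, φ, ⟨hor, hK⟩, hnz⟩ := h
  refine ⟨fun e => ((if (G.ends e).1 = v then !(d e).1 else (d e).1),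
                   (if (G.ends e).2 = v then !(d e).2 else (d e).2)), φ, ⟨?_, ?_⟩, hnz⟩
  · intro e
    have h := hor e
    simp only [switch]
    by_cases h1 : (G.ends e).1 = v <;> by_cases h2 : (G.ends e).2 = v <;>
      simp only [h1, h2, if_true, if_false, decide_eq_true_eq] <;>
      cases hn : G.neg e <;> rw [hn] at h <;>
      cases hd1 : (d e).1 <;> cases hd2 : (d e).2 <;> rw [hd1, hd2] at h <;>
      simp_all
  · intro w
    have hK' := hK w
    unfold vertexSum at hK' ⊢
    simp only [switch_ends]
    by_cases hw : w = v
    · subst hw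
      rw [← neg_eq_zero, ← Finset.sum_neg_distrib] at hK'
      refine Eq.trans (Finset.sum_congr rfl fun e _ => ?_) hK'
      rw [neg_add]
      congr 1
      · by_cases h1 : (G.ends e).1 = w
        · simp only [h1, if_true]
          cases (d e).1 <;> simp
        · simp [h1]
      · by_cases h2 : (G.ends e).2 = w
        · simp only [h2, if_true]
          cases (d e).2 <;> simp
        · simp [h2]
    · refine Eq.trans (Finset.sum_congr rfl fun e _ => ?_) hK'
      congr 1
      · by_cases h1 : (G.ends e).1 = w
        · have hh : ¬ ((G.ends e).1 = v) := by rw [h1]; exact hw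
          simp [h1, hh, hw]
        · simp [h1]
      · by_cases h2 : (G.ends e).2 = w
        · have hh : ¬ ((G.ends e).2 = v) := by rw [h2]; exact hw
          simp [h2, hh, hw]
        · simp [h2]

lemma equiv_ends {G G' : SignedMultigraph V E} (h : G.Equivalent G') : G'.ends = G.ends := by
  induction h with
  | refl => rfl
  | tail _ hstep ih => obtain ⟨v, rfl⟩ := hstep; rw [switch_ends, ih]

lemma equiv_flow_back {Γ : Type} [AddCommGroup Γ] {G G' : SignedMultigraph V E}
    (h : G.Equivalent G') (hf : G'.HasNZGroupFlow Γ) : G.HasNZGroupFlow Γ := by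
  induction h with
  | refl => exact hf
  | tail _ hstep ih =>
    obtain ⟨v, rfl⟩ := hstep
    exact ih (by simpa [switch_switch] using flow_switch _ v hf)

def multiSwitch (G : SignedMultigraph V E) : List V → SignedMultigraph V E
  | [] => G
  | v :: l => multiSwitch (G.switch v) l

lemma multiSwitch_ends (G : SignedMultigraph V E) (l : List V) :
    (multiSwitch G l).ends = G.ends := by
  induction l generalizing G with
  | nil => rfl
  | cons v l ih => rw [multiSwitch, ih, switch_ends]

lemma multiSwitch_equiv (G : SignedMultigraph V E) (l : List V) :
    G.Equivalent (multiSwitch G l) := by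
  induction l generalizing G with
  | nil => exact Relation.ReflTransGen.refl
  | cons v l ih => exact Relation.ReflTransGen.head ⟨v, rfl⟩ (ih (G.switch v))

lemma odd_decide_succ (n : ℕ) : decide (Odd (n+1)) = !decide (Odd n) := by
  by_cases h : Odd n <;> simp [Nat.odd_add_one, h]

lemma odd_count_cons (v a : V) (l : List V) :
    decide (Odd ((v :: l).count a)) =
      xor (decide (a = v)) (decide (Odd (l.count a))) := by
  rw [List.count_cons]
  by_cases h : a = v
  · subst h
    simp [odd_decide_succ]
  · have h' : ¬ v = a := fun hh => h hh.symm
    simp [h, h']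

lemma multiSwitch_neg (G : SignedMultigraph V E) (l : List V) (e : E) :
    (multiSwitch G l).neg e =
      xor (G.neg e) (xor (decide (Odd (l.count (G.ends e).1)))
                          (decide (Odd (l.count (G.ends e).2)))) := by
  induction l generalizing G with
  | nil => simp [multiSwitch]
  | cons v l ih =>
    rw [multiSwitch, ih, switch_ends, odd_count_cons, odd_count_cons]
    simp only [switch]
    cases G.neg e <;> cases decide ((G.ends e).1 = v) <;> cases decide ((G.ends e).2 = v) <;>
      cases decide (Odd (l.count (G.ends e).1)) <;> cases decide (Odd (l.count (G.ends e).2)) <;>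
      rfl
lemma three_terms {ι : Type} [DecidableEq ι] (T : Finset ι) (f : ι → ZMod 3)
    (hcard : T.card = 3) (hsum : ∑ i ∈ T, f i = 0)
    (hval : ∀ i ∈ T, f i = 1 ∨ f i = 2) :
    ∀ i ∈ T, ∀ j ∈ T, f i = f j := by
  rw [Finset.card_eq_three] at hcard
  obtain ⟨a, b, c, hab, hac, hbc, rfl⟩ := hcard
  have hmem : ∀ x ∈ ({a, b, c} : Finset ι), x = a ∨ x = b ∨ x = c := by
    intro x hx; simpa [Finset.mem_insert] using hx
  have ha : a ∈ ({a, b, c} : Finset ι) := by simp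
  have hb : b ∈ ({a, b, c} : Finset ι) := by simp
  have hc : c ∈ ({a, b, c} : Finset ι) := by simp
  rw [Finset.sum_insert (by simp [hab, hac]), Finset.sum_insert (by simp [hbc]),
    Finset.sum_singleton] at hsum
  have key : f a = f b ∧ f b = f c := by
    rcases hval a ha with h1 | h1 <;> rcases hval b hb with h2 | h2 <;>
      rcases hval c hc with h3 | h3 <;> rw [h1, h2, h3] at hsum ⊢ <;>
      first
        | exact ⟨rfl, rfl⟩
        | exact absurd hsum (by decide)
  intro i hi j hj
  rcases hmem i hi with rfl | rfl | rfl <;> rcases hmem j hj with rfl | rfl | rfl <;>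
    simp [key.1, key.2, key.1.trans key.2]

end SignedMultigraph
open SignedMultigraph in
/-- A signed cubic graph has a nowhere-zero `ℤ₃`-flow iff it is antibalanced. -/
theorem stmt_9 {V E : Type} [Fintype V] [Fintype E] [DecidableEq V] [DecidableEq E]
    (G : SignedMultigraph V E) (hcubic : ∀ v : V, G.degIn Finset.univ v = 3) :
    G.HasNZGroupFlow (ZMod 3) ↔ G.Antibalanced := by
  classical
  constructor
  · rintro ⟨d, φ, ⟨hor, hK⟩, hnz⟩
    have hval3 : ∀ x : ZMod 3, x ≠ 0 → x = 1 ∨ x = 2 := by decide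
    have hne1 : ∀ e, (if (d e).1 then φ e else -φ e) ≠ (0 : ZMod 3) := by
      intro e; cases h : (d e).1 <;> simp [h, hnz e]
    have hne2 : ∀ e, (if (d e).2 then φ e else -φ e) ≠ (0 : ZMod 3) := by
      intro e; cases h : (d e).2 <;> simp [h, hnz e]
    have main : ∀ v : V, ∃ s : ZMod 3, s ≠ 0 ∧
        (∀ e, (G.ends e).1 = v → (if (d e).1 then φ e else -φ e) = s) ∧
        (∀ e, (G.ends e).2 = v → (if (d e).2 then φ e else -φ e) = s) := by
      intro v
      set f : E × Bool → ZMod 3 := fun p =>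
        if p.2 then (if (G.ends p.1).2 = v then (if (d p.1).2 then φ p.1 else -φ p.1) else 0)
        else (if (G.ends p.1).1 = v then (if (d p.1).1 then φ p.1 else -φ p.1) else 0) with hf
      set T : Finset (E × Bool) := Finset.univ.filter (fun p => f p ≠ 0) with hT
      have hsum : ∑ i ∈ T, f i = 0 := by
        rw [hT, Finset.sum_filter_ne_zero, Fintype.sum_prod_type]
        have hKv := hK v
        unfold vertexSum at hKv
        rw [← hKv]
        refine Finset.sum_congr rfl fun e _ => ?_
        rw [Fintype.sum_bool, add_comm]
        simp [hf]
      have hcard : T.card = 3 := by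
        have h1 : T.card = ∑ p : E × Bool, (if f p ≠ 0 then 1 else 0) :=
          Finset.card_filter _ _
        rw [h1, Fintype.sum_prod_type]
        have hdeg := hcubic v
        unfold degIn at hdeg
        refine Eq.trans (Finset.sum_congr rfl fun e _ => ?_) hdeg
        rw [Fintype.sum_bool, add_comm]
        congr 1
        · by_cases h : (G.ends e).1 = v <;> simp [hf, h, hne1 e]
        · by_cases h : (G.ends e).2 = v <;> simp [hf, h, hne2 e]
      have hvalT : ∀ i ∈ T, f i = 1 ∨ f i = 2 := fun i hi =>
        hval3 _ ((Finset.mem_filter.mp hi).2)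
      have hall := three_terms T f hcard hsum hvalT
      have hpos : T.Nonempty := Finset.card_pos.mp (by rw [hcard]; norm_num)
      obtain ⟨p, hp⟩ := hpos
      refine ⟨f p, (Finset.mem_filter.mp hp).2, ?_, ?_⟩
      · intro e he
        have hmem : (e, false) ∈ T := by
          rw [hT, Finset.mem_filter]
          exact ⟨Finset.mem_univ _, by simp [hf, he, hne1 e]⟩
        have := hall (e, false) hmem p hp
        simpa [hf, he] using this
      · intro e he
        have hmem : (e, true) ∈ T := by
          rw [hT, Finset.mem_filter]
          exact ⟨Finset.mem_univ _, by simp [hf, he, hne2 e]⟩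
        have := hall (e, true) hmem p hp
        simpa [hf, he] using this
    choose σ hσ using main
    have hσval : ∀ v, σ v = 1 ∨ σ v = 2 := fun v => hval3 _ (hσ v).1
    have hsign : ∀ e, (G.neg e = true → σ (G.ends e).1 = σ (G.ends e).2) ∧
        (G.neg e = false → σ (G.ends e).1 ≠ σ (G.ends e).2) := by
      intro e
      have h1 := (hσ (G.ends e).1).2.1 e rfl
      have h2 := (hσ (G.ends e).2).2.2 e rfl
      constructor
      · intro hn
        have hd := (hor e).1 hn
        rw [← h1, ← h2, hd]
      · intro hn heq
        have hd : ¬ ((d e).1 = (d e).2) := by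
          intro h
          rw [(hor e).2 h] at hn
          exact absurd hn (by decide)
        rw [← h1, ← h2] at heq
        rcases hval3 (φ e) (hnz e) with h | h <;>
          cases hd1 : (d e).1 <;> cases hd2 : (d e).2 <;> rw [hd1, hd2] at heq hd <;>
          first
            | exact hd rfl
            | (rw [h] at heq; revert heq; decide)
    set S : Finset V := Finset.univ.filter (fun v => σ v = 2) with hS
    refine ⟨multiSwitch G S.toList, multiSwitch_equiv G S.toList, ?_⟩
    intro e
    rw [multiSwitch_neg]
    have hcount : ∀ a : V, decide (Odd (S.toList.count a)) = decide (σ a = 2) := by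
      intro a
      by_cases h : σ a = 2
      · have ha : a ∈ S.toList := by rw [Finset.mem_toList]; simp [hS, h]
        rw [List.count_eq_one_of_mem (Finset.nodup_toList S) ha]
        simp [h]
      · have ha : a ∉ S.toList := by rw [Finset.mem_toList]; simp [hS, h]
        rw [List.count_eq_zero_of_not_mem ha]
        simp [h]
    rw [hcount, hcount]
    cases hn : G.neg e with
    | false =>
      have hne := (hsign e).2 hn
      rcases hσval (G.ends e).1 with ha | ha <;> rcases hσval (G.ends e).2 with hb | hb <;>
        simp_all <;> decide
    | true =>
      have heq := (hsign e).1 hn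
      rcases hσval (G.ends e).1 with ha | ha <;> rcases hσval (G.ends e).2 with hb | hb <;>
        simp_all <;> decide
  · rintro ⟨G', hequiv, hneg⟩
    apply equiv_flow_back hequiv
    have hends := equiv_ends hequiv
    refine ⟨fun _ => (true, true), fun _ => 1, ⟨fun e => by simp [hneg e], fun v => ?_⟩,
      fun e => one_ne_zero⟩
    unfold vertexSum
    simp only [hends, if_true]
    have hcast : ∑ e : E, ((if (G.ends e).1 = v then (1 : ZMod 3) else 0) +
        (if (G.ends e).2 = v then (1 : ZMod 3) else 0)) = ((G.degIn Finset.univ v : ℕ) : ZMod 3) := by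
      unfold degIn
      rw [Nat.cast_sum]
      refine Finset.sum_congr rfl fun e _ => ?_
      push_cast
      by_cases h1 : (G.ends e).1 = v <;> by_cases h2 : (G.ends e).2 = v <;> simp [h1, h2]
    rw [hcast, hcubic v]
    decide
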